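/- Let G be a simple graph on a finite vertex set U with |U| = n, and let k be an integer with 1 ≤ k ≤ n and n − k even. Let G' be the simple graph on the vertex set P = U ⊕ (U × Fin 2) ⊕ ((Fin (3(n−k)/2)) × ZMod 4) whose edges are: all edges of G between vertices of U; an edge between u and (u, j) for every u ∈ U and j ∈ Fin 2 (two pendant vertices per vertex of G); and an edge between (c, i) and (c, i+1) for every c ∈ Fin (3(n−k)/2) and i ∈ ZMod 4 (disjoint 4-cycles). Let k' = 3n − 2k, so |P| = 9n − 6k = 3k'. Distances in G' are measured by the shortest-path extended distance edist (taking value ∞ between distinct connected components), and for v ∈ P set NR(v) = min{ r ∈ ℕ∞ : |{w ∈ P : edist(v,w) ≤ r}| ≥ 3 }. If G has a dominating set D ⊆ U with |D| ≤ k, then there exists S ⊆ P with |S| ≤ k' such that edist(v,S) ≤ NR(v) for every v ∈ P. -/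

import Mathlib

/-- The vertex set of the reduction graph: the original vertices `U`, two pendant
vertices per original vertex, and `N` disjoint 4-cycles. -/
abbrev ReductionVertex (U : Type*) (N : ℕ) := U ⊕ (U × Fin 2) ⊕ (Fin N × ZMod 4)

/-- The reduction graph `G'`: all edges of `G`, an edge from each `u ∈ U` to its two
pendant vertices `(u,0)` and `(u,1)`, and `N` disjoint 4-cycles. -/
def reductionGraph {U : Type*} (G : SimpleGraph U) (N : ℕ) :
    SimpleGraph (ReductionVertex U N) :=
  SimpleGraph.fromRel fun a b =>
    match a, b with
    | Sum.inl u, Sum.inl v => G.Adj u v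
    | Sum.inl u, Sum.inr (Sum.inl (v, _)) => u = v
    | Sum.inr (Sum.inr (c, i)), Sum.inr (Sum.inr (c', i')) => c = c' ∧ i' = i + 1
    | _, _ => False

/-- The graph neighborhood radius at `v`: the minimum `r ∈ ℕ∞` such that at least 3
vertices are within shortest-path extended distance `r` of `v`. -/
noncomputable def graphNR {V : Type*} (H : SimpleGraph V) (v : V) : ℕ∞ :=
  sInf {r : ℕ∞ | 3 ≤ {w : V | H.edist v w ≤ r}.ncard}

lemma my_edist_le_one_iff {V : Type*} (H : SimpleGraph V) (u v : V) :
    H.edist u v ≤ 1 ↔ u = v ∨ H.Adj u v := by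
  constructor
  · intro h
    rcases eq_or_ne (H.edist u v) 0 with h0 | h0
    · exact Or.inl (SimpleGraph.edist_eq_zero_iff.mp h0)
    · exact Or.inr (SimpleGraph.edist_eq_one_iff_adj.mp
        (le_antisymm h (Order.one_le_iff_pos.mpr (pos_iff_ne_zero.mpr h0))))
  · rintro (rfl | h)
    · simp [SimpleGraph.edist_self]
    · exact le_of_eq (SimpleGraph.edist_eq_one_iff_adj.mpr h)

lemma my_one_le_graphNR {V : Type*} (H : SimpleGraph V) (v : V) : 1 ≤ graphNR H v := by
  apply le_sInf
  intro b hb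
  by_contra h
  push_neg at h
  rw [ENat.lt_one_iff_eq_zero.mp h] at hb
  simp only [Set.mem_setOf_eq] at hb
  have he : {w : V | H.edist v w ≤ 0} = {v} := by
    ext w
    simp only [Set.mem_setOf_eq, Set.mem_singleton_iff]
    constructor
    · intro hw
      exact (SimpleGraph.edist_eq_zero_iff.mp (le_antisymm hw zero_le)).symm
    · rintro rfl
      simp [SimpleGraph.edist_self]
  rw [he, Set.ncard_singleton] at hb
  norm_num at hb

lemma pendant_nbhd {U : Type*} {N : ℕ} (G : SimpleGraph U) (u : U) (j : Fin 2)
    (w : ReductionVertex U N)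
    (h : (reductionGraph G N).edist (Sum.inr (Sum.inl (u, j))) w ≤ 1) :
    w = Sum.inr (Sum.inl (u, j)) ∨ w = Sum.inl u := by
  rcases (my_edist_le_one_iff _ _ _).mp h with rfl | hadj
  · exact Or.inl rfl
  · rcases w with v | ⟨v, j'⟩ | ⟨c, i⟩
    · right
      simp only [reductionGraph, SimpleGraph.fromRel_adj] at hadj
      rcases hadj.2 with h' | h'
      · exact absurd h' not_false
      · exact congrArg Sum.inl h'
    · exfalso
      simp only [reductionGraph, SimpleGraph.fromRel_adj] at hadj
      exact hadj.2.elim not_false not_false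
    · exfalso
      simp only [reductionGraph, SimpleGraph.fromRel_adj] at hadj
      exact hadj.2.elim not_false not_false

lemma my_two_le_graphNR_pendant {U : Type*} [Fintype U] {N : ℕ} (G : SimpleGraph U)
    (u : U) (j : Fin 2) :
    2 ≤ graphNR (reductionGraph G N) (Sum.inr (Sum.inl (u, j))) := by
  apply le_sInf
  intro b hb
  by_contra h
  push_neg at h
  have hb1 : b ≤ 1 := (ENat.lt_add_one_iff (by simp)).mp h
  have hsub : {w : ReductionVertex U N |
      (reductionGraph G N).edist (Sum.inr (Sum.inl (u, j))) w ≤ b} ⊆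
      {Sum.inr (Sum.inl (u, j)), Sum.inl u} := by
    intro w hw
    rcases pendant_nbhd G u j w (le_trans hw hb1) with rfl | rfl
    · exact Set.mem_insert _ _
    · exact Set.mem_insert_of_mem _ rfl
  have := Set.ncard_le_ncard hsub (Set.toFinite _)
  have h2 : ({Sum.inr (Sum.inl (u, j)), Sum.inl u} :
      Set (ReductionVertex U N)).ncard ≤ 2 :=
    le_trans (Set.ncard_insert_le _ _) (by simp)
  simp only [Set.mem_setOf_eq] at hb
  omega

/-- If `G` has a dominating set of size at most `k`, then 1-fairness is achievable on the
reduction instance with `k' = 3n − 2k` centers. -/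
theorem dominatingSet_to_one_fair {U : Type*} [Fintype U] [DecidableEq U]
    (G : SimpleGraph U) (n k : ℕ) (hn : Fintype.card U = n)
    (hk1 : 1 ≤ k) (hk2 : k ≤ n) (heven : Even (n - k))
    (D : Finset U) (hDcard : D.card ≤ k)
    (hdom : ∀ u : U, u ∈ D ∨ ∃ d ∈ D, G.Adj u d) :
    ∃ S : Finset (ReductionVertex U (3 * (n - k) / 2)),
      S.card ≤ 3 * n - 2 * k ∧
      ∀ v : ReductionVertex U (3 * (n - k) / 2), ∃ s ∈ S,
        (reductionGraph G (3 * (n - k) / 2)).edist v s ≤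
          graphNR (reductionGraph G (3 * (n - k) / 2)) v := by
  set N := 3 * (n - k) / 2 with hN
  set G' := reductionGraph G N with hG'
  -- edist from original vertex u to a dominator is ≤ 1
  have hdomdist : ∀ u : U, ∃ d ∈ D,
      G'.edist (Sum.inl u) (Sum.inl d) ≤ 1 := by
    intro u
    rcases hdom u with hu | ⟨d, hd, hadj⟩
    · exact ⟨u, hu, by simp [SimpleGraph.edist_self]⟩
    · refine ⟨d, hd, (my_edist_le_one_iff _ _ _).mpr (Or.inr ?_)⟩
      rw [hG', reductionGraph, SimpleGraph.fromRel_adj]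
      exact ⟨by simp [hadj.ne], Or.inl hadj⟩
  refine ⟨D.image Sum.inl ∪
    Finset.univ.image (fun c : Fin N => Sum.inr (Sum.inr (c, (0 : ZMod 4)))) ∪
    Finset.univ.image (fun c : Fin N => Sum.inr (Sum.inr (c, (2 : ZMod 4)))), ?_, ?_⟩
  · have h1 : (D.image (Sum.inl : U → ReductionVertex U N)).card ≤ k :=
      le_trans (Finset.card_image_le) hDcard
    have h2 : (Finset.univ.image
        (fun c : Fin N => (Sum.inr (Sum.inr (c, (0 : ZMod 4))) : ReductionVertex U N))).card ≤ N :=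
      le_trans (Finset.card_image_le) (by simp)
    have h3 : (Finset.univ.image
        (fun c : Fin N => (Sum.inr (Sum.inr (c, (2 : ZMod 4))) : ReductionVertex U N))).card ≤ N :=
      le_trans (Finset.card_image_le) (by simp)
    have := le_trans (Finset.card_union_le _ _)
      (add_le_add (le_trans (Finset.card_union_le _ _) (add_le_add h1 h2)) h3)
    obtain ⟨m, hm⟩ := heven
    have hNm : N = 3 * m := by omega
    omega
  · intro v
    rcases v with u | ⟨u, j⟩ | ⟨c, i⟩
    · -- original vertex
      obtain ⟨d, hd, hdist⟩ := hdomdist u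
      refine ⟨Sum.inl d, ?_, le_trans hdist (my_one_le_graphNR _ _)⟩
      exact Finset.mem_union_left _ (Finset.mem_union_left _ (Finset.mem_image_of_mem _ hd))
    · -- pendant vertex
      obtain ⟨d, hd, hdist⟩ := hdomdist u
      refine ⟨Sum.inl d, ?_, ?_⟩
      · exact Finset.mem_union_left _ (Finset.mem_union_left _ (Finset.mem_image_of_mem _ hd))
      · have h1 : G'.edist (Sum.inr (Sum.inl (u, j))) (Sum.inl u) ≤ 1 := by
          refine (my_edist_le_one_iff _ _ _).mpr (Or.inr ?_)
          rw [hG', reductionGraph, SimpleGraph.fromRel_adj]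
          exact ⟨by simp, Or.inr rfl⟩
        calc G'.edist (Sum.inr (Sum.inl (u, j))) (Sum.inl d)
            ≤ G'.edist (Sum.inr (Sum.inl (u, j))) (Sum.inl u)
              + G'.edist (Sum.inl u) (Sum.inl d) := SimpleGraph.edist_triangle
          _ ≤ 1 + 1 := add_le_add h1 hdist
          _ ≤ graphNR G' (Sum.inr (Sum.inl (u, j))) := my_two_le_graphNR_pendant G u j
    · -- cycle vertex
      have hi : i = 0 ∨ i = 1 ∨ i = 2 ∨ i = 3 := by revert i; decide
      have hmem0 := Finset.mem_union_left
        (Finset.univ.image (fun c : Fin N => (Sum.inr (Sum.inr (c, (2 : ZMod 4))) : ReductionVertex U N)))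
        (Finset.mem_union_right (D.image Sum.inl)
          (Finset.mem_image_of_mem (fun c : Fin N => (Sum.inr (Sum.inr (c, (0 : ZMod 4))) : ReductionVertex U N)) (Finset.mem_univ c)))
      have hmem2 := Finset.mem_union_right
        (D.image Sum.inl ∪ Finset.univ.image (fun c : Fin N => (Sum.inr (Sum.inr (c, (0 : ZMod 4))) : ReductionVertex U N)))
        (Finset.mem_image_of_mem (fun c : Fin N => (Sum.inr (Sum.inr (c, (2 : ZMod 4))) : ReductionVertex U N)) (Finset.mem_univ c))
      rcases hi with rfl | rfl | rfl | rfl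
      · exact ⟨_, hmem0, le_trans (by simp [SimpleGraph.edist_self]) zero_le⟩
      · refine ⟨_, hmem2, le_trans ?_ (my_one_le_graphNR _ _)⟩
        refine (my_edist_le_one_iff _ _ _).mpr (Or.inr ?_)
        rw [hG', reductionGraph, SimpleGraph.fromRel_adj]
        refine ⟨by simp; decide, Or.inl ?_⟩
        exact ⟨rfl, by decide⟩
      · exact ⟨_, hmem2, le_trans (by simp [SimpleGraph.edist_self]) zero_le⟩
      · refine ⟨_, hmem0, le_trans ?_ (my_one_le_graphNR _ _)⟩
        refine (my_edist_le_one_iff _ _ _).mpr (Or.inr ?_)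
        rw [hG', reductionGraph, SimpleGraph.fromRel_adj]
        refine ⟨by simp; decide, Or.inl ?_⟩
        exact ⟨rfl, by decide⟩
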